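/- Let f : ℝ^d → ℝ ∪ {+∞} be ρ-strongly convex (i.e., f - (ρ/2)‖·‖² is convex). For any ε ≥ 0, any x ∈ dom f, and any v in the ε-subdifferential of f at x, one has 2ε + f(y) ≥ f(x) + ⟨v, y - x⟩ + (ρ/4)‖y - x‖² for all y ∈ ℝ^d. -/
import Mathlib


open scoped RealInnerProductSpace

/-- Lemma 1 of the paper. If `f : ℝ^d → ℝ ∪ {+∞}` is ρ-strongly convex,
`ε ≥ 0`, `x ∈ dom f` and `v ∈ ∂_ε f(x)`, then
`2ε + f(y) ≥ f(x) + ⟨v, y - x⟩ + (ρ/4)‖y - x‖²` for all `y`. -/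
theorem stmt0 {d : ℕ} (f : EuclideanSpace ℝ (Fin d) → EReal) (ρ : ℝ)
    (hconv : ∀ x y : EuclideanSpace ℝ (Fin d), ∀ t : ℝ, 0 ≤ t → t ≤ 1 →
      f (t • y + (1 - t) • x) ≤
        (t : EReal) * f y + ((1 - t : ℝ) : EReal) * f x
          - ((ρ * t * (1 - t) / 2 * ‖y - x‖ ^ 2 : ℝ) : EReal))
    (ε : ℝ) (hε : 0 ≤ ε)
    (x : EuclideanSpace ℝ (Fin d)) (hx : f x ≠ ⊤)
    (v : EuclideanSpace ℝ (Fin d))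
    (hv : ∀ z : EuclideanSpace ℝ (Fin d),
      f z ≥ f x + ((⟪z - x, v⟫ - ε : ℝ) : EReal)) :
    ∀ y : EuclideanSpace ℝ (Fin d),
      ((2 * ε : ℝ) : EReal) + f y ≥
        f x + ((⟪v, y - x⟫ + ρ / 4 * ‖y - x‖ ^ 2 : ℝ) : EReal) := by
  intro y
  rcases eq_or_ne (f x) ⊥ with hxb | hxb
  · rw [hxb]; simp
  lift f x to ℝ using ⟨hx, hxb⟩ with a ha
  set m : EuclideanSpace ℝ (Fin d) := (1/2 : ℝ) • y + (1 - (1/2 : ℝ)) • x with hm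
  have h1 := hconv x y (1/2) (by norm_num) (by norm_num)
  have h2 := hv m
  have hmx : m - x = (1/2 : ℝ) • (y - x) := by rw [hm]; module
  have hip : ⟪m - x, v⟫ = (1/2) * ⟪v, y - x⟫ := by
    rw [hmx, real_inner_smul_left, real_inner_comm]
  rw [← hm, ← ha] at h1
  rcases eq_or_ne (f y) ⊤ with hyt | hyt
  · rw [hyt, EReal.add_top_iff_ne_bot.2 (EReal.coe_ne_bot _)]
    exact le_top
  rcases eq_or_ne (f y) ⊥ with hyb | hyb
  · exfalso
    rw [hyb] at h1
    have hbot : ((1/2 : ℝ) : EReal) * (⊥ : EReal) = ⊥ :=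
      EReal.mul_bot_of_pos (by exact_mod_cast one_half_pos)
    rw [hbot] at h1
    have hfm : f m = ⊥ := by
      refine le_bot_iff.1 (h1.trans_eq ?_)
      rw [EReal.bot_add, EReal.bot_sub]
    rw [hfm] at h2
    simp only [← EReal.coe_add] at h2
    exact (EReal.bot_lt_coe _).not_ge h2
  lift f y to ℝ using ⟨hyt, hyb⟩ with b hb
  rcases eq_or_ne (f m) ⊤ with hmt | hmt
  · rw [hmt] at h1
    simp only [← EReal.coe_mul, ← EReal.coe_add, ← EReal.coe_sub] at h1
    exact absurd h1 (EReal.coe_lt_top _).not_ge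
  rcases eq_or_ne (f m) ⊥ with hmb | hmb
  · rw [hmb] at h2
    simp only [← EReal.coe_add] at h2
    exact absurd h2 (EReal.bot_lt_coe _).not_ge
  lift f m to ℝ using ⟨hmt, hmb⟩ with c hc
  simp only [← EReal.coe_mul, ← EReal.coe_add, ← EReal.coe_sub, EReal.coe_le_coe_iff,
    ge_iff_le] at h1 h2 ⊢
  rw [hip] at h2
  nlinarith [h1, h2]
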